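/- Let G be a simple nonabelian group acting on ℝ by orientation-preserving homeomorphisms such that every orbit is discrete and the action is nontrivial. Then there is a contradiction: no such action exists with all orbits discrete and some orbit infinite, since a discrete invariant closed set in ℝ yields a nontrivial homomorphism from G to ℤ. -/

import Mathlib

open Set

private lemma aux_disjoint {a b c : ℝ} : Disjoint (Set.Ioc a b) (Set.Ioc b c) :=
  Set.disjoint_left.mpr fun _ hy hy' => absurd hy'.1 (not_lt.mpr hy.2)

/-- Signed count of points of `X` between `a` and `b`. -/
private noncomputable def ctZ (X : Set ℝ) (a b : ℝ) : ℤ :=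
  ((X ∩ Set.Ioc a b).ncard : ℤ) - ((X ∩ Set.Ioc b a).ncard : ℤ)

private lemma ctZ_zero (X : Set ℝ) {a b : ℝ} (h : b ≤ a) : (X ∩ Set.Ioc a b).ncard = 0 := by
  rw [Set.Ioc_eq_empty (not_lt.mpr h), Set.inter_empty, Set.ncard_empty]

private lemma ctZ_card_add {X : Set ℝ} (hfin : ∀ a b : ℝ, (X ∩ Set.Ioc a b).Finite)
    {a b c : ℝ} (hab : a ≤ b) (hbc : b ≤ c) :
    (X ∩ Set.Ioc a c).ncard = (X ∩ Set.Ioc a b).ncard + (X ∩ Set.Ioc b c).ncard := by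
  rw [← Set.Ioc_union_Ioc_eq_Ioc hab hbc, Set.inter_union_distrib_left]
  exact Set.ncard_union_eq (aux_disjoint.mono inter_subset_right inter_subset_right)
    (hfin a b) (hfin b c)

private lemma ctZ_add {X : Set ℝ} (hfin : ∀ a b : ℝ, (X ∩ Set.Ioc a b).Finite)
    (a b c : ℝ) : ctZ X a c = ctZ X a b + ctZ X b c := by
  unfold ctZ
  rcases le_total a b with hab | hab <;> rcases le_total b c with hbc | hbc <;>
    rcases le_total a c with hac | hac
  · have h := ctZ_card_add (a := a) (b := b) (c := c) hfin hab hbc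
    rw [ctZ_zero X hab, ctZ_zero X hbc, ctZ_zero X hac]; push_cast; omega
  · have h := ctZ_card_add (a := a) (b := b) (c := c) hfin hab hbc
    rw [ctZ_zero X hac] at h
    rw [ctZ_zero X hab, ctZ_zero X hbc, ctZ_zero X (hab.trans hbc), ctZ_zero X hac]
    push_cast; omega
  · have h := ctZ_card_add (a := a) (b := c) (c := b) hfin hac hbc
    rw [ctZ_zero X hab, ctZ_zero X hbc, ctZ_zero X hac]; push_cast; omega
  · have h := ctZ_card_add (a := c) (b := a) (c := b) hfin hac hab
    rw [ctZ_zero X hab, ctZ_zero X hbc, ctZ_zero X hac]; push_cast; omega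
  · have h := ctZ_card_add (a := b) (b := a) (c := c) hfin hab hac
    rw [ctZ_zero X hab, ctZ_zero X hbc, ctZ_zero X hac]; push_cast; omega
  · have h := ctZ_card_add (a := b) (b := c) (c := a) hfin hbc hac
    rw [ctZ_zero X hab, ctZ_zero X hbc, ctZ_zero X hac]; push_cast; omega
  · have h := ctZ_card_add (a := c) (b := b) (c := a) hfin hbc hab
    rw [ctZ_zero X hac] at h
    rw [ctZ_zero X hab, ctZ_zero X hbc, ctZ_zero X (hbc.trans hab), ctZ_zero X hac]
    push_cast; omega
  · have h := ctZ_card_add (a := c) (b := b) (c := a) hfin hbc hab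
    rw [ctZ_zero X hab, ctZ_zero X hbc, ctZ_zero X hac]; push_cast; omega

private lemma ctZ_eq_zero_iff {X : Set ℝ} (hfin : ∀ a b : ℝ, (X ∩ Set.Ioc a b).Finite)
    {x y : ℝ} (hxX : x ∈ X) (hy : y ∈ X) (h : ctZ X x y = 0) : y = x := by
  unfold ctZ at h
  rcases lt_trichotomy x y with hlt | heq | hgt
  · have hpos : 0 < (X ∩ Set.Ioc x y).ncard :=
      (Set.ncard_pos (hfin x y)).mpr ⟨y, hy, hlt, le_refl y⟩
    have : (X ∩ Set.Ioc y x).ncard = 0 := ctZ_zero X hlt.le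
    omega
  · exact heq.symm
  · have hpos : 0 < (X ∩ Set.Ioc y x).ncard :=
      (Set.ncard_pos (hfin y x)).mpr ⟨x, hxX, hgt, le_refl x⟩
    have : (X ∩ Set.Ioc x y).ncard = 0 := ctZ_zero X hgt.le
    omega

/-- A simple nonabelian group of orientation-preserving homeomorphisms of `ℝ`
cannot have all orbits closed and discrete with some orbit infinite. -/
theorem no_simple_action_with_discrete_infinite_orbits
    (G : Subgroup (Equiv.Perm ℝ))
    (hcont : ∀ g ∈ G, Continuous g)
    (hmono : ∀ g ∈ G, Monotone g)
    (hsimple : IsSimpleGroup G)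
    (hna : ¬ ∀ a b : G, a * b = b * a)
    (hdisc : ∀ x : ℝ, IsClosed {y : ℝ | ∃ g ∈ G, g x = y} ∧
      DiscreteTopology {y : ℝ | ∃ g ∈ G, g x = y})
    (hinf : ∃ x : ℝ, {y : ℝ | ∃ g ∈ G, g x = y}.Infinite) :
    False := by
  obtain ⟨x, hx⟩ := hinf
  set X : Set ℝ := {y : ℝ | ∃ g ∈ G, g x = y} with hXdef
  have hXclosed : IsClosed X := (hdisc x).1
  have hXdisc : DiscreteTopology X := (hdisc x).2
  have hxX : x ∈ X := ⟨1, one_mem G, rfl⟩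
  -- finiteness of slices
  have hfin : ∀ a b : ℝ, (X ∩ Set.Ioc a b).Finite := by
    intro a b
    have h1 : IsCompact (X ∩ Set.Icc a b) := isCompact_Icc.inter_left hXclosed
    exact (h1.finite (isDiscrete_iff_discreteTopology.mpr (DiscreteTopology.of_subset hXdisc inter_subset_left))).subset
      (inter_subset_inter_right _ Set.Ioc_subset_Icc_self)
  -- the orbit is invariant
  have hmemX : ∀ g ∈ G, ∀ y ∈ X, g y ∈ X := by
    rintro g hg y ⟨h, hh, rfl⟩
    exact ⟨g * h, mul_mem hg hh, rfl⟩
  have hsm : ∀ g ∈ G, StrictMono g := fun g hg =>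
    (hmono g hg).strictMono_of_injective g.injective
  -- invariance of the count
  have hncard : ∀ g ∈ G, ∀ a b : ℝ, (X ∩ Set.Ioc (g a) (g b)).ncard = (X ∩ Set.Ioc a b).ncard := by
    intro g hg a b
    have himg : X ∩ Set.Ioc (g a) (g b) = g '' (X ∩ Set.Ioc a b) := by
      ext y
      simp only [Set.mem_inter_iff, Set.mem_Ioc, Set.mem_image]
      constructor
      · rintro ⟨hyX, h1, h2⟩
        refine ⟨g.symm y, ⟨?_, ?_, ?_⟩, g.apply_symm_apply y⟩
        · have := hmemX g⁻¹ (inv_mem hg) y hyX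
          simpa using this
        · rw [← (hsm g hg).lt_iff_lt, g.apply_symm_apply]; exact h1
        · rw [← (hsm g hg).le_iff_le, g.apply_symm_apply]; exact h2
      · rintro ⟨z, ⟨hzX, hz1, hz2⟩, rfl⟩
        exact ⟨hmemX g hg z hzX, (hsm g hg) hz1, hmono g hg hz2⟩
    rw [himg, Set.ncard_image_of_injective _ g.injective]
  have hctZ : ∀ g ∈ G, ∀ a b : ℝ, ctZ X (g a) (g b) = ctZ X a b := by
    intro g hg a b
    unfold ctZ
    rw [hncard g hg a b, hncard g hg b a]
  -- the translation-number homomorphism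
  let φ : G →* Multiplicative ℤ :=
  { toFun := fun g => Multiplicative.ofAdd (ctZ X x ((g : Equiv.Perm ℝ) x))
    map_one' := by
      have h0 : ctZ X x x = 0 := by unfold ctZ; simp
      simp [h0]
    map_mul' := by
      intro g h
      have key : ctZ X x (((g * h : G) : Equiv.Perm ℝ) x)
          = ctZ X x ((g : Equiv.Perm ℝ) x) + ctZ X x ((h : Equiv.Perm ℝ) x) := by
        have e1 : (((g * h : G) : Equiv.Perm ℝ)) x = (g : Equiv.Perm ℝ) ((h : Equiv.Perm ℝ) x) := rfl
        rw [e1, ctZ_add hfin x ((g : Equiv.Perm ℝ) x) ((g : Equiv.Perm ℝ) ((h : Equiv.Perm ℝ) x)),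
          ← hctZ g g.2 x ((h : Equiv.Perm ℝ) x)]
      simp only [key]
      rfl }
  -- simplicity: kernel is ⊥ or ⊤
  rcases hsimple.eq_bot_or_eq_top_of_normal φ.ker φ.normal_ker with hker | hker
  · -- injective: G embeds in ℤ, abelian, contradicting nonabelian
    have hinj : Function.Injective φ := (MonoidHom.ker_eq_bot_iff φ).mp hker
    apply hna
    intro a b
    apply hinj
    rw [map_mul, map_mul, mul_comm]
  · -- trivial: orbit is {x}, contradicting infiniteness
    have hfix : ∀ g : G, (g : Equiv.Perm ℝ) x = x := by
      intro g
      have hgker : g ∈ φ.ker := hker ▸ Subgroup.mem_top g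
      have h0 : ctZ X x ((g : Equiv.Perm ℝ) x) = 0 := by
        simpa [φ, MonoidHom.mem_ker] using hgker
      exact ctZ_eq_zero_iff hfin hxX (hmemX _ g.2 x hxX) h0
    have hsub : X ⊆ {x} := by
      rintro y ⟨g, hg, rfl⟩
      exact hfix ⟨g, hg⟩
    exact hx ((Set.finite_singleton x).subset hsub)
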